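/- Let p > 2 and r_α(x) = (1/(2π)) ∫_{−1}^{1} (V_α'(t) − V_α'(x))/(t−x) dt/√(1−t²), where V_α(x) = α c_p |x|^p + 2(1−α)x². There exist constants C, c > 0 such that for all α ∈ [0,1] and all x ∈ ℝ: c(1 + α|x|^{p−2}) ≤ r_α(x) ≤ C(1 + α|x|^{p−2}). -/

import Mathlib

open MeasureTheory

/-- `c_p = Γ(p/2)Γ(1/2)/Γ((p+1)/2)`. -/
noncomputable def cp (p : ℝ) : ℝ :=
  Real.Gamma (p / 2) * Real.Gamma (1 / 2) / Real.Gamma ((p + 1) / 2)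

/-- The interpolating potential `V_α(x) = α c_p |x|^p + 2(1−α)x²`. -/
noncomputable def Valpha (p α : ℝ) : ℝ → ℝ :=
  fun x => α * cp p * |x| ^ p + 2 * (1 - α) * x ^ 2

/-- `r_α(x) = (1/(2π)) ∫_{−1}^{1} (V_α'(t) − V_α'(x))/(t−x) · dt/√(1−t²)`. -/
noncomputable def ralpha (p α x : ℝ) : ℝ :=
  1 / (2 * Real.pi) *
    ∫ t in (-1 : ℝ)..1,
      (deriv (Valpha p α) t - deriv (Valpha p α) x) / (t - x) / Real.sqrt (1 - t ^ 2)

lemma cp_pos {p : ℝ} (hp : 2 < p) : 0 < cp p := by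
  unfold cp
  have h1 := Real.Gamma_pos_of_pos (show (0:ℝ) < p / 2 by linarith)
  have h2 := Real.Gamma_pos_of_pos (show (0:ℝ) < 1 / 2 by norm_num)
  have h3 := Real.Gamma_pos_of_pos (show (0:ℝ) < (p + 1) / 2 by linarith)
  positivity

/-! ### The odd power function and its slopes -/

noncomputable def gg (p : ℝ) (u : ℝ) : ℝ := u * |u| ^ (p - 2)

lemma abs_rpow_eq_sq (u q : ℝ) : |u| ^ q = (u ^ 2) ^ (q / 2) := by
  rw [← sq_abs, ← Real.rpow_natCast |u| 2, ← Real.rpow_mul (abs_nonneg u)]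
  congr 1; ring

lemma gg_eq (p u : ℝ) : gg p u = u * (u ^ 2) ^ ((p - 2) / 2) := by
  rw [gg, abs_rpow_eq_sq]

lemma hasDerivAt_gg {p : ℝ} (hp : 2 < p) (u : ℝ) :
    HasDerivAt (gg p) ((p - 1) * |u| ^ (p - 2)) u := by
  rcases eq_or_ne u 0 with rfl | hu
  · rw [hasDerivAt_iff_tendsto_slope]
    have h1 : |(0:ℝ)| ^ (p-2) = 0 := by
      rw [abs_zero, Real.zero_rpow (by linarith)]
    rw [h1, mul_zero]
    have hcont : ContinuousAt (fun u : ℝ => |u| ^ (p - 2)) 0 := by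
      have := (Real.continuousAt_rpow_const |(0:ℝ)| (p-2) (Or.inr (by linarith))).comp
        (continuous_abs.continuousAt (x := (0:ℝ)))
      exact this
    have : Filter.Tendsto (fun u : ℝ => |u| ^ (p - 2)) (nhdsWithin 0 {(0:ℝ)}ᶜ) (nhds 0) := by
      have := hcont.tendsto
      rw [h1] at this
      exact this.mono_left nhdsWithin_le_nhds
    refine this.congr' ?_
    filter_upwards [self_mem_nhdsWithin] with v hv
    have hv' : (v:ℝ) ≠ 0 := hv
    simp only [slope_def_field, gg]
    field_simp
    simp
  · have h2 : (u:ℝ)^2 ≠ 0 := pow_ne_zero 2 hu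
    have hpos : (0:ℝ) < u^2 := by positivity
    have hk : HasDerivAt (fun v : ℝ => (v ^ 2) ^ ((p - 2) / 2))
        ((2*u^1) * ((p-2)/2) * (u^2)^((p-2)/2 - 1)) u :=
      (hasDerivAt_pow 2 u).rpow_const (Or.inl h2) |>.congr_deriv (by push_cast; ring)
    have hprod := (hasDerivAt_id u).mul hk
    have : HasDerivAt (gg p)
        (1 * (u^2)^((p-2)/2) + u * ((2*u^1) * ((p-2)/2) * (u^2)^((p-2)/2 - 1))) u := by
      refine HasDerivAt.congr_of_eventuallyEq ?_ (Filter.Eventually.of_forall fun v => gg_eq p v)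
      exact hprod
    refine this.congr_deriv ?_
    have hsub : (u^2)^((p-2)/2 - 1) = (u^2)^((p-2)/2) / (u^2) := by
      rw [Real.rpow_sub hpos, Real.rpow_one]
    rw [hsub, abs_rpow_eq_sq]
    field_simp
    ring

lemma continuous_gg {p : ℝ} (hp : 2 < p) : Continuous (gg p) :=
  continuous_iff_continuousAt.2 fun u => (hasDerivAt_gg hp u).continuousAt

lemma gg_slope {p : ℝ} (hp : 2 < p) {s t : ℝ} (hst : s < t) :
    ∃ c ∈ Set.Ioo s t, (gg p t - gg p s) / (t - s) = (p - 1) * |c| ^ (p - 2) := by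
  obtain ⟨c, hc, hc2⟩ := exists_hasDerivAt_eq_slope (gg p) (fun u => (p - 1) * |u| ^ (p - 2)) hst
    ((continuous_gg hp).continuousOn) (fun u _ => hasDerivAt_gg hp u)
  exact ⟨c, hc, hc2.symm⟩

lemma flip_div (a b c d : ℝ) : (a - b) / (c - d) = (b - a) / (d - c) := by
  rw [← neg_sub b a, ← neg_sub d c, neg_div_neg_eq]

lemma Q_nonneg {p : ℝ} (hp : 2 < p) (t x : ℝ) :
    0 ≤ (gg p t - gg p x) / (t - x) := by
  have hp1 : (0:ℝ) ≤ p - 1 := by linarith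
  rcases lt_trichotomy t x with h | rfl | h
  · obtain ⟨c, _, hc⟩ := gg_slope hp h
    rw [flip_div, hc]
    exact mul_nonneg hp1 (Real.rpow_nonneg (abs_nonneg c) _)
  · simp
  · obtain ⟨c, _, hc⟩ := gg_slope hp h
    rw [hc]
    exact mul_nonneg hp1 (Real.rpow_nonneg (abs_nonneg c) _)

lemma gg_mono {p : ℝ} (hp : 2 < p) : Monotone (gg p) := by
  intro s t hst
  rcases eq_or_lt_of_le hst with rfl | h
  · exact le_rfl
  have h2 := Q_nonneg hp t s
  have h3 : (0:ℝ) < t - s := by linarith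
  have := mul_nonneg h2 h3.le
  rw [div_mul_cancel₀ _ h3.ne'] at this
  linarith

/-- Upper bound on the slope for `t ∈ [-1,1]`. -/
lemma Q_le {p : ℝ} (hp : 2 < p) {t x : ℝ} (ht : |t| ≤ 1) :
    (gg p t - gg p x) / (t - x) ≤ (p - 1) * (1 + |x| ^ (p - 2)) := by
  have hp1 : (0:ℝ) ≤ p - 1 := by linarith
  have hq : (0:ℝ) ≤ p - 2 := by linarith
  have key : ∀ c : ℝ, |c| ≤ max 1 |x| →
      (p - 1) * |c| ^ (p - 2) ≤ (p - 1) * (1 + |x| ^ (p - 2)) := by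
    intro c hc
    have h1 : |c| ^ (p-2) ≤ 1 + |x| ^ (p-2) := by
      rcases le_total |x| 1 with h | h
      · have hc1 : |c| ≤ 1 := by
          rcases max_cases (1:ℝ) |x| with ⟨he, _⟩ | ⟨he, hle⟩ <;> rw [he] at hc <;> linarith
        have : |c| ^ (p-2) ≤ 1 ^ (p-2) := Real.rpow_le_rpow (abs_nonneg c) hc1 hq
        rw [Real.one_rpow] at this
        have := Real.rpow_nonneg (abs_nonneg x) (p-2)
        linarith
      · have hc1 : |c| ≤ |x| := by
          rcases max_cases (1:ℝ) |x| with ⟨he, hle⟩ | ⟨he, _⟩ <;> rw [he] at hc <;> linarith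
        have : |c| ^ (p-2) ≤ |x| ^ (p-2) := Real.rpow_le_rpow (abs_nonneg c) hc1 hq
        linarith
    nlinarith
  rcases lt_trichotomy t x with h | rfl | h
  · obtain ⟨c, hcm, hc⟩ := gg_slope hp h
    rw [flip_div, hc]
    refine key c ?_
    have h1 := abs_le_max_abs_abs hcm.1.le hcm.2.le
    rcases max_cases |t| |x| with ⟨he, _⟩ | ⟨he, _⟩ <;> rw [he] at h1
    · exact le_trans h1 (le_trans ht (le_max_left _ _))
    · exact le_trans h1 (le_max_right _ _)
  · simp only [sub_self, div_zero]
    have := Real.rpow_nonneg (abs_nonneg t) (p-2)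
    nlinarith
  · obtain ⟨c, hcm, hc⟩ := gg_slope hp h
    rw [hc]
    refine key c ?_
    have h1 := abs_le_max_abs_abs hcm.1.le hcm.2.le
    rcases max_cases |x| |t| with ⟨he, _⟩ | ⟨he, _⟩ <;> rw [he] at h1
    · exact le_trans h1 (le_max_right _ _)
    · exact le_trans h1 (le_trans ht (le_max_left _ _))

lemma gg_neg (p u : ℝ) : gg p (-u) = - gg p u := by
  simp [gg, abs_neg]

lemma gg_one {p : ℝ} : gg p 1 = 1 := by simp [gg]

lemma gg_half {p : ℝ} : gg p (1/2 : ℝ) = (2:ℝ) ^ (1 - p) := by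
  have h0 : |(1/2 : ℝ)| = (1/2 : ℝ) := by rw [abs_of_pos]; norm_num
  have h1 : ((1:ℝ)/2) * ((1:ℝ)/2) ^ (p - 2) = ((1:ℝ)/2) ^ (p - 1) := by
    rw [show p - 1 = 1 + (p-2) by ring, Real.rpow_add (by norm_num), Real.rpow_one]
  rw [gg, h0, h1, show ((1:ℝ)/2) = (2:ℝ)⁻¹ by norm_num,
    Real.inv_rpow (by norm_num), show (1:ℝ) - p = -(p-1) by ring,
    Real.rpow_neg (by norm_num)]

lemma div_lb {num den y w : ℝ} (hy : 0 < y) (hw : 0 ≤ w)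
    (h1 : y * w / 2 ≤ num) (h2 : 0 < den) (h3 : den ≤ 3/2 * y) : w / 3 ≤ num / den := by
  have he : w / 3 = (y * w / 2) / (3/2 * y) := by field_simp
  rw [he]
  exact div_le_div₀ (by nlinarith) h1 h2 h3

lemma div_lb' {num den w : ℝ} (hw : 0 ≤ w)
    (h1 : w ≤ num) (h2 : 0 < den) (h3 : den ≤ 3) : w / 3 ≤ num / den :=
  div_le_div₀ (by linarith) h1 h2 h3

/-- Lower bound on the slope for `|x| ≥ 2`. -/
lemma Q_big {p : ℝ} (hp : 2 < p) {x t : ℝ} (hx : 2 ≤ |x|) (ht : |t| ≤ 1) :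
    |x| ^ (p - 2) / 3 ≤ (gg p t - gg p x) / (t - x) := by
  have hq : (0:ℝ) ≤ p - 2 := by linarith
  have hxpos : (0:ℝ) < |x| := by linarith
  have hx1 : (1:ℝ) ≤ |x| ^ (p-2) := Real.one_le_rpow (by linarith) hq
  have htl := abs_le.1 ht
  rcases le_total x 0 with hxs | hxs
  · have hxe : x = -|x| := by rw [abs_of_nonpos hxs]; ring
    have hggx : gg p x = -(|x| * |x| ^ (p-2)) := by
      have h := gg_neg p |x|
      rw [← hxe] at h
      rw [h, gg, abs_abs]
    have hggt : -1 ≤ gg p t := by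
      have := gg_mono hp (show (-1:ℝ) ≤ t by linarith)
      rw [show (-1:ℝ) = -(1:ℝ) by ring, gg_neg, gg_one] at this
      linarith
    refine div_lb hxpos (Real.rpow_nonneg (abs_nonneg x) _) ?_ ?_ ?_
    · rw [hggx]; nlinarith
    · nlinarith [hxe]
    · nlinarith [hxe]
  · have hxe : x = |x| := (abs_of_nonneg hxs).symm
    rw [flip_div]
    have hggx : gg p x = |x| * |x| ^ (p-2) := by rw [gg, ← hxe]
    have hggt : gg p t ≤ 1 := by
      have := gg_mono hp (show t ≤ (1:ℝ) by linarith)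
      rwa [gg_one] at this
    refine div_lb hxpos (Real.rpow_nonneg (abs_nonneg x) _) ?_ ?_ ?_
    · rw [hggx]; nlinarith
    · nlinarith [hxe]
    · nlinarith [hxe]

lemma Q_half_neg {p : ℝ} (hp : 2 < p) {x t : ℝ} (hxs : x ≤ 0) (hx2 : -2 ≤ x)
    (ht : t ∈ Set.Icc (1/2 : ℝ) (3/4)) :
    (2:ℝ) ^ (1 - p) / 3 ≤ (gg p t - gg p x) / (t - x) := by
  have h2p : (0:ℝ) ≤ (2:ℝ) ^ (1-p) := Real.rpow_nonneg (by norm_num) _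
  have hggx : gg p x ≤ 0 :=
    mul_nonpos_of_nonpos_of_nonneg hxs (Real.rpow_nonneg (abs_nonneg x) _)
  have hggt : (2:ℝ) ^ (1-p) ≤ gg p t := by
    have := gg_mono hp ht.1
    rwa [gg_half] at this
  exact div_lb' h2p (by linarith) (by linarith [ht.1]) (by linarith [ht.2])

lemma Q_half_pos {p : ℝ} (hp : 2 < p) {x t : ℝ} (hxs : 0 ≤ x) (hx2 : x ≤ 2)
    (ht : t ∈ Set.Icc (-3/4 : ℝ) (-1/2)) :
    (2:ℝ) ^ (1 - p) / 3 ≤ (gg p t - gg p x) / (t - x) := by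
  have h2p : (0:ℝ) ≤ (2:ℝ) ^ (1-p) := Real.rpow_nonneg (by norm_num) _
  rw [flip_div]
  have hggx : 0 ≤ gg p x :=
    mul_nonneg hxs (Real.rpow_nonneg (abs_nonneg x) _)
  have hggt : gg p t ≤ -(2:ℝ) ^ (1-p) := by
    have := gg_mono hp ht.2
    rwa [show (-1/2 : ℝ) = -(1/2 : ℝ) by norm_num, gg_neg, gg_half] at this
  exact div_lb' h2p (by linarith) (by linarith [ht.2]) (by linarith [ht.1])

/-! ### Derivative of the potential -/

lemma hasDerivAt_abs_rpow' {p : ℝ} (hp : 2 < p) (x : ℝ) :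
    HasDerivAt (fun x : ℝ => |x| ^ p) (p * gg p x) x := by
  have hk : HasDerivAt (fun v : ℝ => (v ^ 2) ^ (p / 2))
      ((2*x^1) * (p/2) * (x^2)^(p/2 - 1)) x :=
    (hasDerivAt_pow 2 x).rpow_const (Or.inr (by linarith)) |>.congr_deriv (by push_cast; ring)
  have : HasDerivAt (fun x : ℝ => |x| ^ p) ((2*x^1) * (p/2) * (x^2)^(p/2 - 1)) x :=
    hk.congr_of_eventuallyEq (Filter.Eventually.of_forall fun v => abs_rpow_eq_sq v p)
  refine this.congr_deriv ?_
  rw [gg_eq]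
  have h : p / 2 - 1 = (p-2)/2 := by ring
  rw [h]; ring

lemma deriv_Valpha {p : ℝ} (hp : 2 < p) (α x : ℝ) :
    deriv (Valpha p α) x = α * cp p * (p * gg p x) + 4 * (1 - α) * x := by
  refine HasDerivAt.deriv ?_
  have h1 := ((hasDerivAt_abs_rpow' hp x).const_mul (α * cp p))
  have h2 := ((hasDerivAt_pow 2 x).const_mul (2 * (1 - α)))
  have := h1.add h2
  refine this.congr_deriv ?_
  push_cast; ring

/-! ### Weight function -/

lemma w_meas : Measurable (fun t : ℝ => 1 / Real.sqrt (1 - t ^ 2)) := by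
  apply Measurable.div measurable_const
  exact (Real.continuous_sqrt.comp (continuous_const.sub (continuous_pow 2))).measurable

lemma w_intble : IntervalIntegrable (fun t : ℝ => 1 / Real.sqrt (1 - t ^ 2))
    volume (-1) 1 := by
  have h1 : IntervalIntegrable (fun t : ℝ => (1 - t) ^ (-(1/2) : ℝ)) volume (-1) 1 := by
    have := ((intervalIntegral.intervalIntegrable_rpow' (a := 0) (b := 2)
      (by norm_num : (-1:ℝ) < -(1/2))).comp_sub_left 1).symm
    norm_num at this
    exact this
  have h2 : IntervalIntegrable (fun t : ℝ => (1 + t) ^ (-(1/2) : ℝ)) volume (-1) 1 := by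
    have := (intervalIntegral.intervalIntegrable_rpow' (a := 0) (b := 2)
      (by norm_num : (-1:ℝ) < -(1/2))).comp_add_left 1
    norm_num at this
    exact this
  refine (h1.add h2).mono_fun (w_meas.aestronglyMeasurable) ?_
  filter_upwards [ae_restrict_mem measurableSet_uIoc] with t ht
  have htm : t ∈ Set.Ioc (-1:ℝ) 1 := by
    rwa [Set.uIoc_of_le (by norm_num : (-1:ℝ) ≤ 1)] at ht
  have ht1 : (0:ℝ) ≤ 1 - t := by linarith [htm.2]
  have ht2 : (0:ℝ) < 1 + t := by linarith [htm.1]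
  have hb1 : (0:ℝ) ≤ (1-t) ^ (-(1/2):ℝ) := Real.rpow_nonneg ht1 _
  have hb2 : (0:ℝ) ≤ (1+t) ^ (-(1/2):ℝ) := Real.rpow_nonneg ht2.le _
  have key : 1 / Real.sqrt (1 - t^2) ≤ (1-t) ^ (-(1/2):ℝ) + (1+t) ^ (-(1/2):ℝ) := by
    rcases le_total 0 t with hts | hts
    · have h4 : (1:ℝ) - t ≤ 1 - t^2 := by nlinarith [htm.2]
      rcases eq_or_lt_of_le ht1 with he | hlt
      · rw [show (1:ℝ) - t^2 = 0 by nlinarith, Real.sqrt_zero, div_zero]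
        positivity
      · have h5 : Real.sqrt (1 - t) ≤ Real.sqrt (1 - t^2) := Real.sqrt_le_sqrt h4
        have hs : 0 < Real.sqrt (1 - t) := Real.sqrt_pos.2 hlt
        have h6 : 1 / Real.sqrt (1 - t^2) ≤ 1 / Real.sqrt (1 - t) :=
          one_div_le_one_div_of_le hs h5
        have he : 1 / Real.sqrt (1 - t) = (1-t) ^ (-(1/2):ℝ) := by
          rw [Real.rpow_neg ht1, Real.sqrt_eq_rpow, one_div]
        linarith
    · have h4 : (1:ℝ) + t ≤ 1 - t^2 := by nlinarith [htm.1]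
      have h5 : Real.sqrt (1 + t) ≤ Real.sqrt (1 - t^2) := Real.sqrt_le_sqrt h4
      have hs : 0 < Real.sqrt (1 + t) := Real.sqrt_pos.2 ht2
      have h6 : 1 / Real.sqrt (1 - t^2) ≤ 1 / Real.sqrt (1 + t) :=
        one_div_le_one_div_of_le hs h5
      have he : 1 / Real.sqrt (1 + t) = (1+t) ^ (-(1/2):ℝ) := by
        rw [Real.rpow_neg ht2.le, Real.sqrt_eq_rpow, one_div]
      linarith
  rw [Real.norm_eq_abs, Real.norm_eq_abs, abs_of_nonneg (by positivity),
    abs_of_nonneg (by positivity)]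
  exact key

lemma w_integral : ∫ t in (-1:ℝ)..1, 1 / Real.sqrt (1 - t ^ 2) = Real.pi := by
  rw [intervalIntegral.integral_eq_sub_of_hasDerivAt_of_le (by norm_num)
    Real.continuous_arcsin.continuousOn
    (fun x hx => Real.hasDerivAt_arcsin (ne_of_gt hx.1) (ne_of_lt hx.2)) w_intble,
    Real.arcsin_one, Real.arcsin_neg_one]
  ring

lemma sub_uIcc {a b : ℝ} (h1 : -1 ≤ a) (h2 : a ≤ b) (h3 : b ≤ 1) :
    Set.uIcc a b ⊆ Set.uIcc (-1:ℝ) 1 := by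
  rw [Set.uIcc_of_le h2, Set.uIcc_of_le (by norm_num : (-1:ℝ) ≤ 1)]
  exact Set.Icc_subset_Icc h1 h3

lemma div_mono_num {a b c : ℝ} (h : a ≤ b) (hc : 0 ≤ c) : a / c ≤ b / c := by
  rcases hc.eq_or_lt with h0 | h0
  · rw [← h0]; simp
  · gcongr

lemma wc_intble (M : ℝ) : IntervalIntegrable (fun t : ℝ => M / Real.sqrt (1 - t ^ 2))
    volume (-1) 1 := by
  simpa only [mul_one_div] using w_intble.const_mul M

lemma wc_integral (M : ℝ) : ∫ t in (-1:ℝ)..1, M / Real.sqrt (1 - t ^ 2) = M * Real.pi := by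
  have h : ∫ t in (-1:ℝ)..1, M * (1 / Real.sqrt (1 - t ^ 2)) = M * Real.pi := by
    rw [intervalIntegral.integral_const_mul, w_integral]
  simpa only [mul_one_div] using h

set_option maxHeartbeats 1600000 in
theorem stmt14 (p : ℝ) (hp : 2 < p) :
    ∃ C > 0, ∃ c > 0, ∀ α ∈ Set.Icc (0 : ℝ) 1, ∀ x : ℝ,
      c * (1 + α * |x| ^ (p - 2)) ≤ ralpha p α x ∧
      ralpha p α x ≤ C * (1 + α * |x| ^ (p - 2)) := by
  have hπ : (0:ℝ) < Real.pi := Real.pi_pos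
  have hK : (0:ℝ) < cp p * p := mul_pos (cp_pos hp) (by linarith)
  set K : ℝ := cp p * p with hKdef
  have hp1 : (0:ℝ) < p - 1 := by linarith
  have hq : (0:ℝ) ≤ p - 2 := by linarith
  have h2p : (0:ℝ) < (2:ℝ) ^ (1-p) := Real.rpow_pos_of_pos (by norm_num) _
  have h2q : (0:ℝ) < (2:ℝ) ^ (p-2) := Real.rpow_pos_of_pos (by norm_num) _
  set C : ℝ := K * (p - 1) / 2 + 2 with hCdef
  set μ : ℝ := min (K * (2:ℝ)^(1-p) / 3) 4 with hμdef
  have hμpos : 0 < μ := lt_min (by positivity) (by norm_num)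
  set c1 : ℝ := μ / (8 * Real.pi * (1 + (2:ℝ)^(p-2))) with hc1def
  set c2 : ℝ := min (K / 12) 2 with hc2def
  have hc1pos : 0 < c1 := by positivity
  have hc2pos : 0 < c2 := lt_min (by positivity) (by norm_num)
  refine ⟨C, by positivity, min c1 c2, lt_min hc1pos hc2pos, ?_⟩
  rintro α ⟨hα0, hα1⟩ x
  set y : ℝ := |x| ^ (p - 2) with hydef
  have hy0 : 0 ≤ y := Real.rpow_nonneg (abs_nonneg x) _
  set A : ℝ := α * K with hAdef
  set B : ℝ := 4 * (1 - α) with hBdef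
  have hA0 : 0 ≤ A := mul_nonneg hα0 hK.le
  have hB0 : 0 ≤ B := by simp only [hBdef]; linarith
  -- rewrite the integrand
  set S : ℝ → ℝ := fun t => (A * (gg p t - gg p x) + B * (t - x)) / (t - x) with hSdef
  set H : ℝ → ℝ := fun t => S t / Real.sqrt (1 - t ^ 2) with hHdef
  have hrw : ralpha p α x = 1 / (2 * Real.pi) * ∫ t in (-1:ℝ)..1, H t := by
    unfold ralpha
    congr 1
    refine intervalIntegral.integral_congr fun t _ => ?_
    have h : deriv (Valpha p α) t - deriv (Valpha p α) x
        = A * (gg p t - gg p x) + B * (t - x) := by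
      rw [deriv_Valpha hp, deriv_Valpha hp, hAdef, hBdef, hKdef]; ring
    rw [h]
  -- pointwise facts about S
  have hS_eq : ∀ t : ℝ, t ≠ x → S t = A * ((gg p t - gg p x) / (t - x)) + B := by
    intro t ht
    have h : t - x ≠ 0 := sub_ne_zero.2 ht
    simp only [hSdef]
    rw [add_div, mul_div_assoc, mul_div_assoc, div_self h, mul_one]
  have hS_nonneg : ∀ t : ℝ, 0 ≤ S t := by
    intro t
    rcases eq_or_ne t x with rfl | ht
    · simp [hSdef]
    · rw [hS_eq t ht]
      have := Q_nonneg hp t x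
      nlinarith
  have hH_nonneg : ∀ t : ℝ, 0 ≤ H t :=
    fun t => div_nonneg (hS_nonneg t) (Real.sqrt_nonneg _)
  set M : ℝ := A * ((p-1) * (1 + y)) + B with hMdef
  have hM0 : 0 ≤ M := by
    have : 0 ≤ (p-1) * (1+y) := by nlinarith
    nlinarith
  have hS_le : ∀ t : ℝ, |t| ≤ 1 → S t ≤ M := by
    intro t ht
    rcases eq_or_ne t x with rfl | htx
    · simpa [hSdef] using hM0
    · rw [hS_eq t htx]
      have := Q_le hp (x := x) ht
      simp only [hMdef]
      nlinarith
  -- integrability of H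
  have hH_meas : Measurable H := by
    apply Measurable.div _ (Real.continuous_sqrt.comp
      (continuous_const.sub (continuous_pow 2))).measurable
    apply Measurable.div _ (measurable_id.sub measurable_const)
    exact (measurable_const.mul ((continuous_gg hp).measurable.sub measurable_const)).add
      (measurable_const.mul (measurable_id.sub measurable_const))
  have hH_int : IntervalIntegrable H volume (-1) 1 := by
    refine (wc_intble M).mono_fun hH_meas.aestronglyMeasurable ?_
    filter_upwards [ae_restrict_mem measurableSet_uIoc] with t ht
    have htm : t ∈ Set.Ioc (-1:ℝ) 1 := by
      rwa [Set.uIoc_of_le (by norm_num : (-1:ℝ) ≤ 1)] at ht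
    have ht1 : |t| ≤ 1 := abs_le.2 ⟨htm.1.le, htm.2⟩
    rw [Real.norm_eq_abs, Real.norm_eq_abs, abs_of_nonneg (hH_nonneg t),
      abs_of_nonneg (div_nonneg hM0 (Real.sqrt_nonneg _))]
    exact div_mono_num (hS_le t ht1) (Real.sqrt_nonneg _)
  -- upper bound for the integral
  have hIle : (∫ t in (-1:ℝ)..1, H t) ≤ M * Real.pi := by
    rw [← wc_integral M]
    refine intervalIntegral.integral_mono_on (by norm_num) hH_int (wc_intble M) ?_
    intro t ht
    have ht1 : |t| ≤ 1 := abs_le.2 ⟨ht.1, ht.2⟩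
    exact div_mono_num (hS_le t ht1) (Real.sqrt_nonneg _)
  constructor
  · -- LOWER BOUND
    rw [hrw]
    rcases le_total 2 |x| with hx2 | hx2
    · -- case |x| ≥ 2
      have hy1 : (1:ℝ) ≤ y := by
        rw [hydef]; exact Real.one_le_rpow (by linarith) hq
      set m : ℝ := A * (y/3) + B with hmdef
      have hIge : m * Real.pi ≤ ∫ t in (-1:ℝ)..1, H t := by
        rw [← wc_integral m]
        refine intervalIntegral.integral_mono_on (by norm_num) (wc_intble m) hH_int ?_
        intro t ht
        have ht1 : |t| ≤ 1 := abs_le.2 ⟨ht.1, ht.2⟩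
        have htx : t ≠ x := by
          intro h; rw [h] at ht1; linarith
        have hQ := Q_big hp hx2 ht1
        rw [← hydef] at hQ
        have hSm : m ≤ S t := by
          rw [hS_eq t htx, hmdef]
          nlinarith [hQ, hA0]
        exact div_mono_num hSm (Real.sqrt_nonneg _)
      have hc2K : c2 ≤ K / 12 := min_le_left _ _
      have hc22 : c2 ≤ 2 := min_le_right _ _
      have h1 : 0 ≤ c2 * α * (y - 1) :=
        mul_nonneg (mul_nonneg hc2pos.le hα0) (by linarith)
      have h2 : 0 ≤ (1 - α) * (2 - c2) :=
        mul_nonneg (by linarith) (by linarith)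
      have h3 : 0 ≤ α * y * (K/6 - 2*c2) :=
        mul_nonneg (mul_nonneg hα0 hy0) (by linarith)
      have key2 : c2 * (1 + α * y) ≤ m / 2 := by
        simp only [hmdef, hAdef, hBdef]
        nlinarith [h1, h2, h3]
      have step1 : min c1 c2 * (1 + α * y) ≤ c2 * (1 + α * y) :=
        mul_le_mul_of_nonneg_right (min_le_right _ _) (by nlinarith)
      have step3 : m / 2 ≤ 1 / (2 * Real.pi) * ∫ t in (-1:ℝ)..1, H t := by
        have := mul_le_mul_of_nonneg_left hIge
          (by positivity : (0:ℝ) ≤ 1 / (2 * Real.pi))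
        have he : 1 / (2 * Real.pi) * (m * Real.pi) = m / 2 := by
          field_simp
        linarith
      linarith
    · -- case |x| ≤ 2
      have hy2 : y ≤ (2:ℝ) ^ (p - 2) := by
        rw [hydef]; exact Real.rpow_le_rpow (abs_nonneg x) hx2 hq
      set m0 : ℝ := A * ((2:ℝ)^(1-p)/3) + B with hm0def
      have habs := abs_le.1 hx2
      -- splitting lemma
      have hsplit : ∀ a b : ℝ, (-1) ≤ a → a ≤ b → b ≤ 1 →
          (∀ t ∈ Set.Icc a b, m0 ≤ H t) →
          m0 * (b - a) ≤ ∫ t in (-1:ℝ)..1, H t := by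
        intro a b ha hab hb hlow
        have iab : IntervalIntegrable H volume a b :=
          hH_int.mono_set (sub_uIcc ha hab hb)
        have i1 : IntervalIntegrable H volume (-1) a :=
          hH_int.mono_set (sub_uIcc (le_refl (-1)) ha (by linarith))
        have i2 : IntervalIntegrable H volume b 1 :=
          hH_int.mono_set (sub_uIcc (by linarith) hb (le_refl 1))
        have i12 : IntervalIntegrable H volume (-1) b :=
          hH_int.mono_set (sub_uIcc (le_refl (-1)) (by linarith) hb)
        have e1 := intervalIntegral.integral_add_adjacent_intervals i1 iab
        have e2 := intervalIntegral.integral_add_adjacent_intervals i12 i2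
        have hnn1 : 0 ≤ ∫ t in (-1:ℝ)..a, H t :=
          intervalIntegral.integral_nonneg ha (fun u _ => hH_nonneg u)
        have hnn2 : 0 ≤ ∫ t in b..1, H t :=
          intervalIntegral.integral_nonneg hb (fun u _ => hH_nonneg u)
        have hmid : m0 * (b - a) ≤ ∫ t in a..b, H t := by
          have := intervalIntegral.integral_mono_on hab
            (intervalIntegrable_const (c := m0)) iab hlow
          rwa [intervalIntegral.integral_const, smul_eq_mul, mul_comm] at this
        linarith [e1, e2]
      have hm00 : 0 ≤ m0 := by
        rw [hm0def]
        exact add_nonneg (mul_nonneg hA0 (by positivity)) hB0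
      have hm0H : ∀ t : ℝ, (1:ℝ)/4 ≤ 1 - t^2 → t ≠ x →
          (2:ℝ)^(1-p)/3 ≤ (gg p t - gg p x) / (t - x) → m0 ≤ H t := by
        intro t hsq htx hQ
        have hsq_pos : 0 < Real.sqrt (1 - t^2) := Real.sqrt_pos.2 (by linarith)
        have hsq_le : Real.sqrt (1 - t^2) ≤ 1 := by
          have h := Real.sqrt_le_sqrt (show 1 - t^2 ≤ 1 by nlinarith)
          rwa [Real.sqrt_one] at h
        have hSge : m0 ≤ S t := by
          rw [hS_eq t htx, hm0def]
          nlinarith [hQ, hA0]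
        show m0 ≤ S t / Real.sqrt (1 - t^2)
        rw [le_div_iff₀ hsq_pos]
        nlinarith [hS_nonneg t, hsq_pos.le]
      have hI4 : m0 * (1/4 : ℝ) ≤ ∫ t in (-1:ℝ)..1, H t := by
        rcases le_total x 0 with hxs | hxs
        · have key : ∀ t ∈ Set.Icc (1/2:ℝ) (3/4), m0 ≤ H t := by
            intro t ht
            have htx : t ≠ x := by
              intro h; rw [h] at ht; exact absurd ht.1 (by intro hh; linarith)
            exact hm0H t (by nlinarith [ht.1, ht.2]) htx
              (Q_half_neg hp hxs (by linarith [habs.1]) ht)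
          have h := hsplit (1/2) (3/4) (by norm_num) (by norm_num) (by norm_num) key
          have he : ((3:ℝ)/4 - 1/2) = 1/4 := by norm_num
          rwa [he] at h
        · have key : ∀ t ∈ Set.Icc (-3/4:ℝ) (-1/2), m0 ≤ H t := by
            intro t ht
            have htx : t ≠ x := by
              intro h; rw [h] at ht; exact absurd ht.2 (by intro hh; linarith)
            exact hm0H t (by nlinarith [ht.1, ht.2]) htx
              (Q_half_pos hp hxs (by linarith [habs.2]) ht)
          have h := hsplit (-3/4) (-1/2) (by norm_num) (by norm_num) (by norm_num) key
          have he : ((-1:ℝ)/2 - (-3/4)) = 1/4 := by norm_num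
          rwa [he] at h
      have hμm0 : μ ≤ m0 := by
        have hμ1 : μ ≤ K * (2:ℝ)^(1-p) / 3 := min_le_left _ _
        have hμ2 : μ ≤ 4 := min_le_right _ _
        rw [hm0def, hAdef, hBdef]
        nlinarith [mul_nonneg hα0 (sub_nonneg.2 hμ1),
          mul_nonneg (sub_nonneg.2 hα1) (sub_nonneg.2 hμ2)]
      have step1 : min c1 c2 * (1 + α*y) ≤ c1 * (1 + α*y) :=
        mul_le_mul_of_nonneg_right (min_le_left _ _)
          (by nlinarith [mul_nonneg hα0 hy0])
      have step2 : c1 * (1 + α*y) ≤ c1 * (1 + (2:ℝ)^(p-2)) := by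
        refine mul_le_mul_of_nonneg_left ?_ hc1pos.le
        nlinarith [hy2, mul_nonneg (sub_nonneg.2 hα1) hy0]
      have step3 : c1 * (1 + (2:ℝ)^(p-2)) = μ / (8*Real.pi) := by
        rw [hc1def]; field_simp
      have step4 : μ / (8*Real.pi) ≤ 1/(2*Real.pi) * ∫ t in (-1:ℝ)..1, H t := by
        have hμm : μ * (1/4 : ℝ) ≤ ∫ t in (-1:ℝ)..1, H t := by
          have h0 : μ * (1/4 : ℝ) ≤ m0 * (1/4 : ℝ) :=
            mul_le_mul_of_nonneg_right hμm0 (by norm_num)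
          exact h0.trans hI4
        have h := mul_le_mul_of_nonneg_left hμm
          (by positivity : (0:ℝ) ≤ 1/(2*Real.pi))
        have he : 1/(2*Real.pi) * (μ * (1/4 : ℝ)) = μ/(8*Real.pi) := by
          field_simp
          try ring
          try exact Or.inl trivial
        linarith
      linarith
  · -- UPPER BOUND
    rw [hrw]
    have h1 : 1 / (2*Real.pi) * (∫ t in (-1:ℝ)..1, H t)
        ≤ 1/(2*Real.pi) * (M * Real.pi) :=
      mul_le_mul_of_nonneg_left hIle (by positivity)
    have h2 : 1/(2*Real.pi) * (M * Real.pi) = M / 2 := by field_simp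
    rw [h2] at h1
    refine le_trans h1 ?_
    simp only [hMdef, hAdef, hBdef, hCdef]
    nlinarith [mul_nonneg (mul_nonneg hα0 hy0) hK.le, mul_nonneg hα0 hy0,
      mul_nonneg (mul_nonneg (sub_nonneg.2 hα1) hK.le) hp1.le]
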